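/- Let M be a symmetric 2×2 matrix of linear forms over ℂ with det M = 0. Then there exists S ∈ GL(2,ℂ) such that S·M·Sᵀ has form [[*,0],[0,0]], i.e. all entries of S·M·Sᵀ except possibly the (0,0) entry are zero. -/

import Mathlib

open Matrix MvPolynomial

noncomputable section

/-- The polynomial ring `ℂ[x₀,…,x_{n-1}]`. -/
abbrev CPoly (n : ℕ) := MvPolynomial (Fin n) ℂ

/-- All entries of the matrix are linear forms (homogeneous of degree 1, possibly 0). -/
def LinForms {k n : ℕ} (M : Matrix (Fin k) (Fin k) (CPoly n)) : Prop :=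
  ∀ i j, (M i j).IsHomogeneous 1

/-- Skew-symmetric matrix with zero diagonal. -/
def IsSkewMat {k n : ℕ} (M : Matrix (Fin k) (Fin k) (CPoly n)) : Prop :=
  Mᵀ = -M ∧ ∀ i, M i i = 0

/-- Congruence action `M ↦ S·M·Sᵀ` of a constant matrix `S` on a matrix of polynomials. -/
def Congr {k n : ℕ} (S : Matrix (Fin k) (Fin k) ℂ) (M : Matrix (Fin k) (Fin k) (CPoly n)) :
    Matrix (Fin k) (Fin k) (CPoly n) :=
  S.map MvPolynomial.C * M * (S.map MvPolynomial.C)ᵀ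

/-- `M` has skew format `P` : some congruent matrix `S·M·Sᵀ` (with `S` invertible) has form `P`. -/
def HasFmt {k n : ℕ} (P : Matrix (Fin k) (Fin k) (CPoly n) → Prop)
    (M : Matrix (Fin k) (Fin k) (CPoly n)) : Prop :=
  ∃ S : Matrix (Fin k) (Fin k) ℂ, IsUnit S.det ∧ P (Congr S M)

/-- A `6×6` matrix built from four `3×3` blocks. -/
def blk {n : ℕ} (A B C D : Matrix (Fin 3) (Fin 3) (CPoly n)) :
    Matrix (Fin 6) (Fin 6) (CPoly n) :=
  Matrix.reindex finSumFinEquiv finSumFinEquiv (Matrix.fromBlocks A B C D)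


lemma single_of_degree_one {n : ℕ} (m : Fin n →₀ ℕ) (h : m.degree = 1) :
    ∃ i, m = Finsupp.single i 1 := by
  have hne : m.support.Nonempty := by
    rw [Finset.nonempty_iff_ne_empty]
    intro he
    have : m = 0 := by rwa [← Finsupp.support_eq_empty]
    simp [this, map_zero] at h
  obtain ⟨i, hi⟩ := hne
  refine ⟨i, Finsupp.eq_single_iff.2 ⟨?_, ?_⟩⟩
  · intro j hj
    simp only [Finset.mem_singleton]
    by_contra hji
    have hsub : ({i, j} : Finset (Fin n)) ⊆ m.support := by
      intro k hk
      simp only [Finset.mem_insert, Finset.mem_singleton] at hk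
      rcases hk with rfl | rfl <;> assumption
    have h2 : m i + m j ≤ m.degree := by
      rw [Finsupp.degree]
      calc m i + m j = ∑ k ∈ ({i, j} : Finset (Fin n)), m k := by
            rw [Finset.sum_pair (fun hij => hji hij.symm)]
        _ ≤ _ := Finset.sum_le_sum_of_subset hsub
    have h1i : 1 ≤ m i := Nat.one_le_iff_ne_zero.2 (Finsupp.mem_support_iff.1 hi)
    have h1j : 1 ≤ m j := Nat.one_le_iff_ne_zero.2 (Finsupp.mem_support_iff.1 hj)
    omega
  · have h1i : 1 ≤ m i := Nat.one_le_iff_ne_zero.2 (Finsupp.mem_support_iff.1 hi)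
    have := Finsupp.le_degree i m
    omega

lemma rep {n : ℕ} {p : CPoly n} (hp : p.IsHomogeneous 1) :
    p = ∑ i : Fin n, C (coeff (Finsupp.single i 1) p) * X i := by
  ext m
  rw [coeff_sum]
  simp only [coeff_C_mul, coeff_X']
  by_cases hm : m.degree = 1
  · obtain ⟨i, rfl⟩ := single_of_degree_one m hm
    rw [Finset.sum_eq_single i]
    · simp
    · intro j _ hj
      rw [if_neg, mul_zero]
      exact fun hs => hj (by simpa using (Finsupp.single_left_injective one_ne_zero) hs)
    · simp
  · rw [hp.coeff_eq_zero hm]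
    refine (Finset.sum_eq_zero fun i _ => ?_).symm
    rw [if_neg, mul_zero]
    rintro rfl
    exact hm (by simp [Finsupp.degree_apply, Finsupp.support_single_ne_zero _ one_ne_zero])
lemma eval_rep {n : ℕ} (b : Fin n → ℂ) (x : Fin n → ℂ) :
    eval x (∑ i : Fin n, C (b i) * X i) = ∑ i : Fin n, b i * x i := by
  simp [map_sum]

lemma key {n : ℕ} {a b c : CPoly n} (ha : a.IsHomogeneous 1) (hb : b.IsHomogeneous 1)
    (hc : c.IsHomogeneous 1) (hcne : c ≠ 0) (h : b * b = a * c) :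
    ∃ l : ℂ, b = C l * c ∧ a = C l * C l * c := by
  set A : Fin n → ℂ := fun i => coeff (Finsupp.single i 1) a with hA
  set B : Fin n → ℂ := fun i => coeff (Finsupp.single i 1) b with hB
  set Cc : Fin n → ℂ := fun i => coeff (Finsupp.single i 1) c with hCc
  obtain ⟨i, hi⟩ : ∃ i, Cc i ≠ 0 := by
    by_contra hall
    push_neg at hall
    apply hcne
    rw [rep hc]
    exact Finset.sum_eq_zero fun j _ => by
      rw [show coeff (Finsupp.single j 1) c = 0 from hall j, map_zero, zero_mul]
  -- scalar identities via evaluation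
  have E : ∀ (j : Fin n) (s t : ℂ), j ≠ i →
      (B i * s + B j * t) * (B i * s + B j * t) = (A i * s + A j * t) * (Cc i * s + Cc j * t) := by
    intro j s t hji
    have hx : ∀ (P : Fin n → ℂ),
        (∑ k : Fin n, P k * ((if k = i then s else 0) + (if k = j then t else 0)))
          = P i * s + P j * t := by
      intro P
      simp only [mul_add, Finset.sum_add_distrib, mul_ite, mul_zero]
      rw [Finset.sum_ite_eq' Finset.univ i (fun k => P k * s),
          Finset.sum_ite_eq' Finset.univ j (fun k => P k * t)]
      simp
    have := congrArg (eval fun k : Fin n => (if k = i then s else 0) + (if k = j then t else 0)) h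
    rw [_root_.map_mul, _root_.map_mul] at this
    rw [rep ha, rep hb, rep hc, eval_rep, eval_rep, eval_rep] at this
    rw [hx A, hx B, hx Cc] at this
    exact this
  have hBj : ∀ j, B j * Cc i = B i * Cc j := by
    intro j
    rcases eq_or_ne j i with rfl | hji
    · ring
    have E10 := E j 1 0 hji
    have E01 := E j 0 1 hji
    have E11 := E j 1 1 hji
    have E1m := E j 1 (-1) hji
    have hsq : (B j * Cc i - B i * Cc j) * (B j * Cc i - B i * Cc j) = 0 := by
      linear_combination (Cc i)^2 * E01 + (Cc j)^2 * E10 - (Cc i * Cc j / 2) * E11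
        + (Cc i * Cc j / 2) * E1m
    have := mul_self_eq_zero.1 hsq
    linear_combination this
  refine ⟨B i / Cc i, ?_, ?_⟩
  · have hbc : b = C (B i / Cc i) * c := by
      rw [rep hb, rep hc, Finset.mul_sum]
      refine Finset.sum_congr rfl fun j _ => ?_
      rw [← mul_assoc, ← C_mul]
      have hj : B j = B i / Cc i * Cc j := by
        field_simp
        linear_combination hBj j
      exact congrArg (· * X j) (congrArg C hj)
    exact hbc
  · have hbc : b = C (B i / Cc i) * c := by
      rw [rep hb, rep hc, Finset.mul_sum]
      refine Finset.sum_congr rfl fun j _ => ?_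
      rw [← mul_assoc, ← C_mul]
      have hj : B j = B i / Cc i * Cc j := by
        field_simp
        linear_combination hBj j
      exact congrArg (· * X j) (congrArg C hj)
    have h2 : a * c = (C (B i / Cc i) * C (B i / Cc i) * c) * c := by
      rw [← h, hbc]; ring
    exact mul_right_cancel₀ hcne h2

/-- A symmetric `2×2` matrix of linear forms with vanishing determinant is congruent to a
matrix whose only possibly nonzero entry is in position `(0,0)`. -/
theorem statement11 {n : ℕ} (hn : 1 ≤ n) (M : Matrix (Fin 2) (Fin 2) (CPoly n))
    (hlin : LinForms M) (hsymm : Mᵀ = M) (hdet : M.det = 0) :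
    ∃ S : Matrix (Fin 2) (Fin 2) ℂ, IsUnit S.det ∧
      Congr S M 0 1 = 0 ∧ Congr S M 1 0 = 0 ∧ Congr S M 1 1 = 0 := by
  have hb10 : M 1 0 = M 0 1 := by
    calc M 1 0 = Mᵀ 0 1 := rfl
      _ = M 0 1 := by rw [hsymm]
  rw [Matrix.det_fin_two] at hdet
  have hdet2 : M 0 1 * M 0 1 = M 0 0 * M 1 1 := by
    linear_combination (-1 : CPoly n) * hdet - M 0 1 * hb10
  by_cases hc : M 1 1 = 0
  · have hb0 : M 0 1 = 0 := by
      have := hdet2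
      rw [hc, mul_zero] at this
      exact mul_self_eq_zero.1 this
    have hcongr : Congr 1 M = M := by
      unfold Congr
      rw [show ((1 : Matrix (Fin 2) (Fin 2) ℂ).map C) = 1 from
        Matrix.map_one C (map_zero C) (map_one C), Matrix.transpose_one, one_mul, mul_one]
    refine ⟨1, by simp, ?_, ?_, ?_⟩ <;> rw [hcongr]
    · exact hb0
    · rw [hb10]; exact hb0
    · exact hc
  · obtain ⟨l, hbl, hal⟩ := key (hlin 0 0) (hlin 0 1) (hlin 1 1) hc hdet2
    have e00 : !![(0:ℂ), 1; 1, -l] 0 0 = 0 := rfl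
    have e01 : !![(0:ℂ), 1; 1, -l] 0 1 = 1 := rfl
    have e10 : !![(0:ℂ), 1; 1, -l] 1 0 = 1 := rfl
    have e11 : !![(0:ℂ), 1; 1, -l] 1 1 = -l := rfl
    refine ⟨!![0, 1; 1, -l], ?_, ?_, ?_, ?_⟩
    · rw [Matrix.det_fin_two_of]
      simp [isUnit_iff_ne_zero]
    all_goals
      simp only [Congr, Matrix.mul_apply, Fin.sum_univ_two, Matrix.map_apply,
        Matrix.transpose_apply, Matrix.cons_val', Matrix.cons_val_zero, Matrix.cons_val_one,
        Matrix.head_cons, Matrix.head_fin_const, Matrix.empty_val', Matrix.cons_val_fin_one,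
        C_0, C_1, map_neg, zero_mul, mul_zero, one_mul, mul_one, zero_add, add_zero,
        e00, e01, e10, e11]
    · linear_combination hb10 + hbl
    · linear_combination hbl
    · linear_combination hal - C l * hb10 - 2 * C l * hbl
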